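/- Let |φ⟩ = Σ a_{ij}|ij⟩ be a unit vector in ℂ^{d1}⊗ℂ^{d2} with d1, d2 ≥ 2. Then C²(|φ⟩) ≥ (1/((d1−1)(d2−1))) · Σ C²(|φ⟩_{2⊗2}), where the sum runs over all (d1 choose 2)(d2 choose 2) choices of index pairs i_1<i_2, j_1<j_2, |φ⟩_{2⊗2} = Σ_{i∈{i_1,i_2}, j∈{j_1,j_2}} a_{ij}|ij⟩ is the corresponding unnormalized two-qubit substate, and C² of an unnormalized two-qubit vector with coefficients b is given by the homogeneous formula C²(ψ) = Σ_{i,p∈{i_1,i_2}} Σ_{j,q∈{j_1,j_2}} |b_{ij}b_{pq} − b_{pj}b_{iq}|². -/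

import Mathlib

open scoped BigOperators

namespace Stmt11

/-- The (unnormalized) projector `|v⟩⟨v|` associated to a vector `v`. -/
noncomputable def outer {I : Type*} (v : I → ℂ) : Matrix I I ℂ :=
  Matrix.of fun x y => v x * (starRingEnd ℂ) (v y)

/-- `tr(ρ₁²)` where `ρ₁` is the reduced matrix of a bipartite matrix `ρ`
on the first factor. -/
noncomputable def tr1sq {d1 d2 : ℕ}
    (ρ : Matrix (Fin d1 × Fin d2) (Fin d1 × Fin d2) ℂ) : ℂ :=
  ∑ i, ∑ p, (∑ j, ρ (i, j) (p, j)) * (∑ j, ρ (p, j) (i, j))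

/-- Bipartite pure-state concurrence `C(|φ⟩) = √(2(1 − tr(ρ₁²)))`. -/
noncomputable def pureC2 {d1 d2 : ℕ} (φ : Fin d1 × Fin d2 → ℂ) : ℝ :=
  Real.sqrt (2 * (1 - (tr1sq (outer φ)).re))

/-- Squared concurrence of a (possibly unnormalized) two-qubit vector,
given by the homogeneous coefficient formula. -/
noncomputable def C2sqCoeff (b : Fin 2 × Fin 2 → ℂ) : ℝ :=
  ∑ i, ∑ p, ∑ j, ∑ q,
    ‖b (i, j) * b (p, q) - b (p, j) * b (i, q)‖ ^ 2

/-- The (unnormalized) two-qubit substate of `a` determined by the index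
pairs `i₁,i₂` and `j₁,j₂`. -/
noncomputable def subvec {d1 d2 : ℕ} (a : Fin d1 × Fin d2 → ℂ)
    (i₁ i₂ : Fin d1) (j₁ j₂ : Fin d2) : Fin 2 × Fin 2 → ℂ :=
  fun x => a (if x.1 = 0 then i₁ else i₂, if x.2 = 0 then j₁ else j₂)

noncomputable def g {d1 d2 : ℕ} (a : Fin d1 × Fin d2 → ℂ)
    (i p : Fin d1) (j q : Fin d2) : ℝ :=
  ‖a (i, j) * a (p, q) - a (p, j) * a (i, q)‖ ^ 2

lemma g_nonneg {d1 d2 : ℕ} (a : Fin d1 × Fin d2 → ℂ)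
    (i p : Fin d1) (j q : Fin d2) : 0 ≤ g a i p j q := sq_nonneg _

lemma g_diag1 {d1 d2 : ℕ} (a : Fin d1 × Fin d2 → ℂ)
    (i : Fin d1) (j q : Fin d2) : g a i i j q = 0 := by
  simp [g]

lemma g_diag2 {d1 d2 : ℕ} (a : Fin d1 × Fin d2 → ℂ)
    (i p : Fin d1) (j : Fin d2) : g a i p j j = 0 := by
  simp [g, mul_comm]

lemma g_symm1 {d1 d2 : ℕ} (a : Fin d1 × Fin d2 → ℂ)
    (i p : Fin d1) (j q : Fin d2) : g a i p j q = g a p i j q := by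
  unfold g
  rw [show a (p, j) * a (i, q) - a (i, j) * a (p, q)
      = -(a (i, j) * a (p, q) - a (p, j) * a (i, q)) by ring,
    norm_neg]

lemma g_symm2 {d1 d2 : ℕ} (a : Fin d1 × Fin d2 → ℂ)
    (i p : Fin d1) (j q : Fin d2) : g a i p j q = g a i p q j := by
  unfold g
  rw [show a (i, q) * a (p, j) - a (p, q) * a (i, j)
      = -(a (i, j) * a (p, q) - a (p, j) * a (i, q)) by ring,
    norm_neg]

/-- Splitting a symmetric sum with vanishing diagonal over ordered pairs. -/
lemma pair_sum {n : ℕ} (h : Fin n → Fin n → ℝ)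
    (hd : ∀ i, h i i = 0) (hs : ∀ i p, h i p = h p i) :
    ∑ i, ∑ p, h i p = 2 * ∑ i, ∑ p, (if i < p then h i p else 0) := by
  have key : ∀ i p : Fin n,
      h i p = (if i < p then h i p else 0) + (if p < i then h i p else 0) := by
    intro i p
    rcases lt_trichotomy i p with h1 | h1 | h1
    · simp [h1, asymm h1]
    · simp [h1, hd]
    · simp [h1, asymm h1]
  calc ∑ i, ∑ p, h i p
      = ∑ i, ∑ p, ((if i < p then h i p else 0) + (if p < i then h i p else 0)) := by
        simp_rw [← key]
    _ = (∑ i, ∑ p, (if i < p then h i p else 0))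
        + (∑ i, ∑ p, (if p < i then h i p else 0)) := by
        simp [Finset.sum_add_distrib]
    _ = 2 * ∑ i, ∑ p, (if i < p then h i p else 0) := by
        rw [Finset.sum_comm (f := fun i p => (if p < i then h i p else 0))]
        simp_rw [fun i p => hs p i]
        ring

lemma C2_eval (b : Fin 2 × Fin 2 → ℂ) :
    C2sqCoeff b = 4 * ‖b (0, 0) * b (1, 1) - b (1, 0) * b (0, 1)‖ ^ 2 := by
  simp only [C2sqCoeff, Fin.sum_univ_two, Complex.sq_norm]
  simp only [Complex.normSq_apply, Complex.sub_re, Complex.sub_im,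
    Complex.mul_re, Complex.mul_im]
  ring

lemma subvec_eval {d1 d2 : ℕ} (a : Fin d1 × Fin d2 → ℂ)
    (i₁ i₂ : Fin d1) (j₁ j₂ : Fin d2) :
    C2sqCoeff (subvec a i₁ i₂ j₁ j₂) = 4 * g a i₁ i₂ j₁ j₂ := by
  rw [C2_eval]
  simp [subvec, g]

/-- The total squared-determinant sum. -/
noncomputable def Stot {d1 d2 : ℕ} (a : Fin d1 × Fin d2 → ℂ) : ℝ :=
  ∑ i, ∑ p, ∑ j, ∑ q, g a i p j q

lemma Stot_nonneg {d1 d2 : ℕ} (a : Fin d1 × Fin d2 → ℂ) : 0 ≤ Stot a := by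
  unfold Stot
  refine Finset.sum_nonneg fun i _ => Finset.sum_nonneg fun p _ =>
    Finset.sum_nonneg fun j _ => Finset.sum_nonneg fun q _ => g_nonneg a i p j q

lemma Stot_eq_four {d1 d2 : ℕ} (a : Fin d1 × Fin d2 → ℂ) :
    Stot a = ∑ i₁, ∑ i₂, ∑ j₁, ∑ j₂,
      (if i₁ < i₂ ∧ j₁ < j₂ then 4 * g a i₁ i₂ j₁ j₂ else 0) := by
  have inner : ∀ i p : Fin d1, ∑ j, ∑ q, g a i p j q
      = 2 * ∑ j, ∑ q, (if j < q then g a i p j q else 0) := by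
    intro i p
    exact pair_sum (fun j q => g a i p j q) (fun j => g_diag2 a i p j)
      (fun j q => g_symm2 a i p j q)
  have outer : Stot a = 2 * ∑ i, ∑ p,
      (if i < p then ∑ j, ∑ q, g a i p j q else 0) := by
    unfold Stot
    exact pair_sum (fun i p => ∑ j, ∑ q, g a i p j q)
      (fun i => by simp [g_diag1])
      (fun i p => by simp_rw [fun j q => g_symm1 a i p j q])
  rw [outer]
  rw [Finset.mul_sum]
  refine Finset.sum_congr rfl fun i₁ _ => ?_
  rw [Finset.mul_sum]
  refine Finset.sum_congr rfl fun i₂ _ => ?_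
  by_cases h : i₁ < i₂
  · simp only [h, if_true, true_and, inner i₁ i₂, Finset.mul_sum]
    refine Finset.sum_congr rfl fun j₁ _ => Finset.sum_congr rfl fun j₂ _ => ?_
    by_cases hj : j₁ < j₂ <;> simp [hj]; ring
  · simp [h]

lemma quad_prod {n m : ℕ} (f h : Fin n → Fin m → ℝ) :
    ∑ i, ∑ p, ∑ j, ∑ q, f i j * h p q
      = (∑ i, ∑ j, f i j) * (∑ p, ∑ q, h p q) := by
  simp_rw [Finset.sum_mul, Finset.mul_sum]
  exact Finset.sum_congr rfl fun i _ => Finset.sum_comm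

lemma Stot_eq_conc {d1 d2 : ℕ} (a : Fin d1 × Fin d2 → ℂ)
    (ha : ∑ x, Complex.normSq (a x) = 1) :
    Stot a = 2 * (1 - (tr1sq (outer a)).re) := by
  have hterm : ∀ (i p : Fin d1) (j q : Fin d2),
      g a i p j q = Complex.normSq (a (i, j)) * Complex.normSq (a (p, q))
        + Complex.normSq (a (p, j)) * Complex.normSq (a (i, q))
        - 2 * (a (i, j) * a (p, q)
            * (starRingEnd ℂ) (a (p, j) * a (i, q))).re := by
    intro i p j q
    rw [g, Complex.sq_norm, Complex.normSq_sub, Complex.normSq_mul,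
      Complex.normSq_mul]
  have h1 : ∑ (i : Fin d1), ∑ (p : Fin d1), ∑ (j : Fin d2), ∑ (q : Fin d2),
      Complex.normSq (a (i, j)) * Complex.normSq (a (p, q)) = 1 := by
    have := ha
    rw [Fintype.sum_prod_type] at this
    rw [quad_prod (fun i j => Complex.normSq (a (i, j)))
      (fun p q => Complex.normSq (a (p, q))), this, one_mul]
  have h2 : ∑ (i : Fin d1), ∑ (p : Fin d1), ∑ (j : Fin d2), ∑ (q : Fin d2),
      Complex.normSq (a (p, j)) * Complex.normSq (a (i, q)) = 1 := by
    have := ha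
    rw [Fintype.sum_prod_type] at this
    rw [Finset.sum_comm]
    rw [quad_prod (fun p j => Complex.normSq (a (p, j)))
      (fun i q => Complex.normSq (a (i, q))), this, one_mul]
  have h3 : ∑ (i : Fin d1), ∑ (p : Fin d1), ∑ (j : Fin d2), ∑ (q : Fin d2),
      (a (i, j) * a (p, q) * (starRingEnd ℂ) (a (p, j) * a (i, q))).re
      = (tr1sq (outer a)).re := by
    have : tr1sq (outer a) = ∑ (i : Fin d1), ∑ (p : Fin d1), ∑ (j : Fin d2),
        ∑ (q : Fin d2), a (i, j) * a (p, q)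
          * (starRingEnd ℂ) (a (p, j) * a (i, q)) := by
      unfold tr1sq outer
      refine Finset.sum_congr rfl fun i _ => Finset.sum_congr rfl fun p _ => ?_
      rw [Finset.sum_mul_sum]
      refine Finset.sum_congr rfl fun j _ => Finset.sum_congr rfl fun q _ => ?_
      simp only [Matrix.of_apply, map_mul]
      ring
    rw [this]
    simp [Complex.re_sum]
  unfold Stot
  simp_rw [hterm]
  rw [show ∀ (F G H : Fin d1 → Fin d1 → Fin d2 → Fin d2 → ℝ),
    (∑ i, ∑ p, ∑ j, ∑ q, (F i p j q + G i p j q - 2 * H i p j q))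
      = (∑ i, ∑ p, ∑ j, ∑ q, F i p j q) + (∑ i, ∑ p, ∑ j, ∑ q, G i p j q)
        - 2 * (∑ i, ∑ p, ∑ j, ∑ q, H i p j q) from by
      intro F G H
      simp [Finset.sum_add_distrib, Finset.sum_sub_distrib, Finset.mul_sum]]
  rw [h1, h2, h3]
  ring

/-- for a unit vector `|φ⟩ = Σ a_{ij}|ij⟩` in `ℂ^{d1}⊗ℂ^{d2}`
with `d1, d2 ≥ 2`,
`C²(|φ⟩) ≥ (1/((d1−1)(d2−1))) Σ C²(|φ⟩_{2⊗2})`, the sum over all choices of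
index pairs `i₁<i₂`, `j₁<j₂`. -/
theorem stmt_11 {d1 d2 : ℕ} (hd1 : 2 ≤ d1) (hd2 : 2 ≤ d2)
    (a : Fin d1 × Fin d2 → ℂ)
    (ha : ∑ x, Complex.normSq (a x) = 1) :
    (pureC2 a) ^ 2 ≥
      (1 / (((d1 : ℝ) - 1) * ((d2 : ℝ) - 1))) *
        ∑ i₁, ∑ i₂, ∑ j₁, ∑ j₂,
          if i₁ < i₂ ∧ j₁ < j₂ then C2sqCoeff (subvec a i₁ i₂ j₁ j₂) else 0 := by
  have hQ : (∑ i₁, ∑ i₂, ∑ j₁, ∑ j₂,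
      if i₁ < i₂ ∧ j₁ < j₂ then C2sqCoeff (subvec a i₁ i₂ j₁ j₂) else 0)
      = Stot a := by
    rw [Stot_eq_four]
    simp_rw [subvec_eval]
  have hS0 := Stot_nonneg a
  have hC : pureC2 a ^ 2 = Stot a := by
    unfold pureC2
    rw [Real.sq_sqrt, ← Stot_eq_conc a ha]
    rw [← Stot_eq_conc a ha]; exact hS0
  rw [ge_iff_le, hQ, hC]
  have hd1' : (2:ℝ) ≤ (d1:ℝ) := by exact_mod_cast hd1
  have hd2' : (2:ℝ) ≤ (d2:ℝ) := by exact_mod_cast hd2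
  have hK : (1:ℝ) ≤ ((d1:ℝ) - 1) * ((d2:ℝ) - 1) := by nlinarith
  have h1K : 1 / (((d1:ℝ) - 1) * ((d2:ℝ) - 1)) ≤ 1 := by
    rw [div_le_one (by linarith)]; exact hK
  calc 1 / (((d1:ℝ) - 1) * ((d2:ℝ) - 1)) * Stot a ≤ 1 * Stot a :=
        mul_le_mul_of_nonneg_right h1K hS0
    _ = Stot a := one_mul _

end Stmt11
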